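/- Every graph G falls under precisely one of these four cases, where M = M[IAS(G)]: (1) if n = 0 then κ*(M) = 0 and τ(M) = ∞; (2) if n = 1 or G is disconnected then τ(M) = κ*(M) = 1; (3) if n > 1, G is connected, and G has a pendant vertex or a pair of twin vertices, then τ(M) = κ*(M) = 2; (4) if n > 1, G is connected, and G has neither a pendant vertex nor a pair of twin vertices, then τ(M) = κ*(M) = 3. -/

import Mathlib

open scoped ENat

variable {V : Type*} [Fintype V] [DecidableEq V]

/-- The column of the matrix `IAS(G) = (I | A | A+I)` indexed by `(v, i)`:
`i = 0` gives `φ(v)` (identity column), `i = 1` gives `χ(v)` (column of `A`),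
`i = 2` gives `ψ(v)` (column of `A + I`). -/
def iasCol (A : Matrix V V (ZMod 2)) : V × Fin 3 → V → ZMod 2 :=
  fun p w =>
    if p.2 = 0 then (if w = p.1 then 1 else 0)
    else if p.2 = 1 then A w p.1
    else A w p.1 + (if w = p.1 then 1 else 0)

/-- The rank of a subset of the ground set `W(G) = V × Fin 3` of the isotropic
matroid: the GF(2)-rank of the corresponding set of columns. -/
noncomputable def iasRank (A : Matrix V V (ZMod 2)) (S : Set (V × Fin 3)) : ℕ :=
  Module.finrank (ZMod 2) (Submodule.span (ZMod 2) (iasCol A '' S))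

/-- The connectivity function `λ(S) = r(S) + r(W - S) - r(M)`. -/
noncomputable def iasLambda (A : Matrix V V (ZMod 2)) (S : Set (V × Fin 3)) : ℕ :=
  iasRank A S + iasRank A Sᶜ - iasRank A Set.univ

/-- Independence in the isotropic matroid. -/
def iasIndep (A : Matrix V V (ZMod 2)) (S : Set (V × Fin 3)) : Prop :=
  LinearIndependent (ZMod 2) (fun s : S => iasCol A s.1)

/-- Circuits of the isotropic matroid: minimal dependent sets. -/
def iasCircuit (A : Matrix V V (ZMod 2)) (C : Set (V × Fin 3)) : Prop :=
  ¬ iasIndep A C ∧ ∀ S ⊂ C, iasIndep A S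

/-- An ordinary `k`-separation: `λ(S) < k` and `|S|, |W - S| ≥ k`. -/
def OrdinarySep (A : Matrix V V (ZMod 2)) (k : ℕ) (S : Set (V × Fin 3)) : Prop :=
  0 < k ∧ iasLambda A S < k ∧ k ≤ S.ncard ∧ k ≤ Sᶜ.ncard

/-- A cyclic `k`-separation: `λ(S) < k` and both `S` and `W - S` are dependent. -/
def CyclicSep (A : Matrix V V (ZMod 2)) (k : ℕ) (S : Set (V × Fin 3)) : Prop :=
  0 < k ∧ iasLambda A S < k ∧ ¬ iasIndep A S ∧ ¬ iasIndep A Sᶜ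

/-- A vertical `k`-separation: `λ(S) < k` and `r(S), r(W - S) ≥ k`. -/
def VerticalSep (A : Matrix V V (ZMod 2)) (k : ℕ) (S : Set (V × Fin 3)) : Prop :=
  0 < k ∧ iasLambda A S < k ∧ k ≤ iasRank A S ∧ k ≤ iasRank A Sᶜ

/-- `τ(M) = min {k : M has an ordinary k-separation}`, with `min ∅ = ∞`. -/
noncomputable def iasTau (A : Matrix V V (ZMod 2)) : ℕ∞ :=
  sInf {k : ℕ∞ | ∃ m : ℕ, (m : ℕ∞) = k ∧ ∃ S, OrdinarySep A m S}

/-- `κ*(M) = min ({k : M has a cyclic k-separation} ∪ {|W| - r(M)})`. -/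
noncomputable def iasKappaStar (A : Matrix V V (ZMod 2)) : ℕ :=
  sInf ({k : ℕ | ∃ S, CyclicSep A k S} ∪ {3 * Fintype.card V - iasRank A Set.univ})

/-- `κ(M) = min ({k : M has a vertical k-separation} ∪ {r(M)})`. -/
noncomputable def iasKappa (A : Matrix V V (ZMod 2)) : ℕ :=
  sInf ({k : ℕ | ∃ S, VerticalSep A k S} ∪ {iasRank A Set.univ})

/-- The simple graph underlying a looped simple graph given by its adjacency matrix. -/
def toSimpleGraph (A : Matrix V V (ZMod 2)) : SimpleGraph V where
  Adj v w := v ≠ w ∧ A v w = 1 ∧ A w v = 1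
  symm := ⟨fun v w ⟨h1, h2, h3⟩ => ⟨Ne.symm h1, h3, h2⟩⟩
  loopless := ⟨fun v h => h.1 rfl⟩

/-- The open neighborhood `N_G(v)`. -/
def nbhd (A : Matrix V V (ZMod 2)) (v : V) : Set V := {u | u ≠ v ∧ A v u = 1}

/-- `v` is a pendant vertex: `N_G(v) = {w}` for some `w`. -/
def IsPendant (A : Matrix V V (ZMod 2)) (v : V) : Prop := ∃ w, nbhd A v = {w}

/-- `G` has a pair of twin vertices: `v ≠ w` with `N_G(v) - {w} = N_G(w) - {v}`. -/
def HasTwins (A : Matrix V V (ZMod 2)) : Prop :=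
  ∃ v w, v ≠ w ∧ nbhd A v \ {w} = nbhd A w \ {v}

/-- The cut-rank `c_G(X)`: the GF(2)-rank of the submatrix `A[V - X, X]`
(columns indexed by `X`, rows indexed by `V - X`). -/
noncomputable def cutRank (A : Matrix V V (ZMod 2)) (X : Set V) : ℕ :=
  Module.finrank (ZMod 2)
    (Submodule.span (ZMod 2) ((fun x : V => fun w : ↥(Xᶜ) => A w.1 x) '' X))

/-- `τ_G(X) = ⋃_{x ∈ X} τ_G(x)`, the union of the vertex triples of members of `X`. -/
def tauSet (X : Set V) : Set (V × Fin 3) := {p | p.1 ∈ X}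

/-- Loop complementation at `v`. -/
def loopComp (A : Matrix V V (ZMod 2)) (v : V) : Matrix V V (ZMod 2) :=
  fun x y => A x y + if x = v ∧ y = v then 1 else 0

/-- Simple local complementation at `v`. -/
def simpleLocalComp (A : Matrix V V (ZMod 2)) (v : V) : Matrix V V (ZMod 2) :=
  fun x y => A x y +
    if x ≠ y ∧ (x ≠ v ∧ A v x = 1) ∧ (y ≠ v ∧ A v y = 1) then 1 else 0

/-- Non-simple local complementation at `v`. -/
def nonSimpleLocalComp (A : Matrix V V (ZMod 2)) (v : V) : Matrix V V (ZMod 2) :=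
  fun x y => simpleLocalComp A v x y + if x = y ∧ x ≠ v ∧ A v x = 1 then 1 else 0

/-- One local move. -/
def LocalStep (A B : Matrix V V (ZMod 2)) : Prop :=
  ∃ v, B = loopComp A v ∨ B = simpleLocalComp A v ∨ B = nonSimpleLocalComp A v

/-- Local equivalence: a finite sequence of loop complementations and
(simple or non-simple) local complementations. -/
def LocallyEquiv (A B : Matrix V V (ZMod 2)) : Prop :=
  Relation.ReflTransGen LocalStep A B

/-- `G` has a split: a bipartition `(V₁, V₂)` of `V` with `|V₁|, |V₂| ≥ 2` such that the
GF(2)-rank of `A[V₁, V₂]` is at most 1. -/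
def HasSplit (A : Matrix V V (ZMod 2)) : Prop :=
  ∃ X : Set V, 2 ≤ X.ncard ∧ 2 ≤ Xᶜ.ncard ∧ cutRank A X ≤ 1

/-- A transverse circuit: a circuit of the isotropic matroid meeting each
vertex triple at most once. -/
def IsTransverseCircuit (A : Matrix V V (ZMod 2)) (C : Set (V × Fin 3)) : Prop :=
  iasCircuit A C ∧ ∀ p ∈ C, ∀ q ∈ C, p.1 = q.1 → p = q

/-- An isotropic `k`-separation of `G`: `|X|, |V - X| ≥ k` and `c_G(X) < k`. -/
def IsotropicSep (A : Matrix V V (ZMod 2)) (k : ℕ) (X : Set V) : Prop :=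
  k ≤ X.ncard ∧ k ≤ Xᶜ.ncard ∧ cutRank A X < k

/-- The isotropic connectivity `κ_B(G)`, with `min ∅ = ∞`. -/
noncomputable def kappaB (A : Matrix V V (ZMod 2)) : ℕ∞ :=
  sInf {j : ℕ∞ | ∃ k : ℕ, (k : ℕ∞) = j ∧ ∃ X, IsotropicSep A k X}

/-- The 5-cycle `C₅`. -/
def C5mat : Matrix (Fin 5) (Fin 5) (ZMod 2) :=
  fun i j => if (i.val + 1) % 5 = j.val ∨ (j.val + 1) % 5 = i.val then 1 else 0

/-- The wheel `W₅` : a 5-cycle on `{0,…,4}` plus a hub `5` adjacent to all. -/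
def W5mat : Matrix (Fin 6) (Fin 6) (ZMod 2) :=
  fun i j =>
    if (i.val = 5 ∧ j.val ≠ 5) ∨ (j.val = 5 ∧ i.val ≠ 5) then 1
    else if i.val ≠ 5 ∧ j.val ≠ 5 ∧ ((i.val + 1) % 5 = j.val ∨ (j.val + 1) % 5 = i.val) then 1
    else 0
set_option linter.unusedSectionVars false
set_option maxHeartbeats 1000000

namespace IsoAux

noncomputable abbrev USp (A : Matrix V V (ZMod 2)) (S : Set (V × Fin 3)) :
    Submodule (ZMod 2) (V → ZMod 2) := Submodule.span (ZMod 2) (iasCol A '' S)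

lemma rank_def (A : Matrix V V (ZMod 2)) (S : Set (V × Fin 3)) :
    iasRank A S = Module.finrank (ZMod 2) (USp A S) := rfl

lemma col0 (A : Matrix V V (ZMod 2)) (v : V) : iasCol A (v, (0 : Fin 3)) = Pi.single v 1 := by
  funext w; simp [iasCol, Pi.single_apply]

lemma col1_apply (A : Matrix V V (ZMod 2)) (v w : V) : iasCol A (v, (1 : Fin 3)) w = A w v := by
  simp [iasCol]

lemma col2_apply (A : Matrix V V (ZMod 2)) (v w : V) :
    iasCol A (v, (2 : Fin 3)) w = A w v + (if w = v then 1 else 0) := by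
  simp [iasCol]

lemma col_cycle (A : Matrix V V (ZMod 2)) (v : V) (i : Fin 3) :
    iasCol A (v, i) = iasCol A (v, i + 1) + iasCol A (v, i + 2) := by
  have key : ∀ a b : ZMod 2, b = a + (a + b) := by decide
  have key2 : ∀ a b : ZMod 2, a = (a + b) + b := by decide
  fin_cases i <;> funext w <;>
    simp [iasCol, Pi.add_apply] <;> first | exact key _ _ | exact key2 _ _ | ring

lemma mem_USp (A : Matrix V V (ZMod 2)) {S : Set (V × Fin 3)} {p : V × Fin 3} (hp : p ∈ S) :
    iasCol A p ∈ USp A S := Submodule.subset_span ⟨p, hp, rfl⟩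

lemma single_mem (A : Matrix V V (ZMod 2)) {S : Set (V × Fin 3)} {v : V}
    (hv : (v, (0 : Fin 3)) ∈ S) : Pi.single v 1 ∈ USp A S := by
  rw [← col0 A v]; exact mem_USp A hv

lemma USp_univ (A : Matrix V V (ZMod 2)) : USp A Set.univ = ⊤ := by
  rw [eq_top_iff]
  intro f _
  have hf : f = ∑ v : V, f v • Pi.single v (1 : ZMod 2) := by
    funext w
    rw [Finset.sum_apply]
    simp only [Pi.smul_apply, Pi.single_apply, smul_eq_mul, mul_ite, mul_one, mul_zero]
    rw [Finset.sum_ite_eq Finset.univ w (fun v => f v)]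
    simp
  rw [hf]
  exact Submodule.sum_mem _ fun v _ => Submodule.smul_mem _ _
    (single_mem A (Set.mem_univ _))

lemma rank_univ (A : Matrix V V (ZMod 2)) : iasRank A Set.univ = Fintype.card V := by
  rw [rank_def, USp_univ, finrank_top]
  simp [Module.finrank_pi]

lemma rank_le_card (A : Matrix V V (ZMod 2)) (S : Set (V × Fin 3)) :
    iasRank A S ≤ Fintype.card V := by
  rw [rank_def]
  calc Module.finrank (ZMod 2) (USp A S) ≤ Module.finrank (ZMod 2) (V → ZMod 2) :=
        Submodule.finrank_le _
    _ = Fintype.card V := Module.finrank_pi _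

lemma lambda_eq (A : Matrix V V (ZMod 2)) (S : Set (V × Fin 3)) :
    iasLambda A S = Module.finrank (ZMod 2) ↥(USp A S ⊓ USp A Sᶜ) := by
  have hsup : USp A S ⊔ USp A Sᶜ = USp A Set.univ := by
    rw [USp, USp, USp, ← Submodule.span_union, ← Set.image_union, Set.union_compl_self]
  have h := Submodule.finrank_sup_add_finrank_inf_eq (USp A S) (USp A Sᶜ)
  rw [hsup, USp_univ, finrank_top] at h
  have hpi : Module.finrank (ZMod 2) (V → ZMod 2) = Fintype.card V := Module.finrank_pi _
  rw [hpi] at h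
  have hr := rank_univ A
  unfold iasLambda
  rw [rank_def A S, rank_def A Sᶜ, hr]
  omega

lemma lambda_le_rank (A : Matrix V V (ZMod 2)) (S : Set (V × Fin 3)) :
    iasLambda A S ≤ iasRank A S := by
  have h1 : iasRank A Sᶜ ≤ Fintype.card V := rank_le_card A _
  have h2 := rank_univ A
  unfold iasLambda
  omega

lemma indep_mono (A : Matrix V V (ZMod 2)) {S T : Set (V × Fin 3)} (h : S ⊆ T)
    (hT : iasIndep A T) : iasIndep A S := by
  have := hT.comp (Set.inclusion h) (Set.inclusion_injective h)
  exact this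

lemma dep_of_eq (A : Matrix V V (ZMod 2)) {S : Set (V × Fin 3)} {p q : V × Fin 3}
    (hpq : p ≠ q) (hp : p ∈ S) (hq : q ∈ S) (heq : iasCol A p = iasCol A q) :
    ¬ iasIndep A S := by
  intro hind
  have : (⟨p, hp⟩ : S) = ⟨q, hq⟩ := hind.injective heq
  exact hpq (Subtype.mk_eq_mk.mp this)

lemma dep_of_zero (A : Matrix V V (ZMod 2)) {S : Set (V × Fin 3)} {p : V × Fin 3}
    (hp : p ∈ S) (h0 : iasCol A p = 0) : ¬ iasIndep A S := by
  intro hind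
  exact hind.ne_zero ⟨p, hp⟩ h0

lemma indep_eq_ncard (A : Matrix V V (ZMod 2)) {S : Set (V × Fin 3)} (h : iasIndep A S) :
    iasRank A S = S.ncard := by
  haveI : Fintype ↥S := Fintype.ofFinite _
  have hr : iasCol A '' S = Set.range fun s : S => iasCol A s.1 := Set.image_eq_range _ _
  have := finrank_span_eq_card h
  rw [iasRank, hr, this, ← Nat.card_coe_set_eq, Nat.card_eq_fintype_card]

lemma dep_of_card (A : Matrix V V (ZMod 2)) {S : Set (V × Fin 3)}
    (h : iasRank A S < S.ncard) : ¬ iasIndep A S := by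
  intro hind
  rw [indep_eq_ncard A hind] at h
  omega

lemma indep_empty (A : Matrix V V (ZMod 2)) : iasIndep A (∅ : Set (V × Fin 3)) :=
  linearIndependent_empty_type

lemma indep_of_subsingleton (A : Matrix V V (ZMod 2)) {S : Set (V × Fin 3)}
    (hS : S.Subsingleton) (h0 : ∀ p ∈ S, iasCol A p ≠ 0) : iasIndep A S := by
  rcases hS.eq_empty_or_singleton with rfl | ⟨p, rfl⟩
  · exact indep_empty A
  · haveI : Unique ↥({p} : Set (V × Fin 3)) := Set.uniqueSingleton p
    refine linearIndependent_unique_iff.mpr ?_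
    have hd : ((default : ↥({p} : Set (V × Fin 3))) : V × Fin 3) = p :=
      Set.eq_of_mem_singleton (Subtype.mem _)
    rw [hd]
    exact h0 p rfl



lemma indicator_sum (X : Set V) (f : V → ZMod 2) [DecidablePred (· ∈ X)] :
    X.indicator f = ∑ t ∈ Finset.univ.filter (· ∈ X), f t • Pi.single t 1 := by
  funext w
  rw [Finset.sum_apply]
  simp only [Pi.smul_apply, Pi.single_apply, smul_eq_mul, mul_ite, mul_one, mul_zero]
  rw [Finset.sum_ite_eq (Finset.univ.filter (· ∈ X)) w (fun v => f v)]
  by_cases hw : w ∈ X <;> simp [Set.indicator_apply, hw]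

lemma indicator_mem (X : Set V) (f : V → ZMod 2) (M : Submodule (ZMod 2) (V → ZMod 2))
    (h : ∀ t ∈ X, Pi.single t (1 : ZMod 2) ∈ M) : X.indicator f ∈ M := by
  classical
  rw [indicator_sum X f]
  exact Submodule.sum_mem _ fun t ht =>
    Submodule.smul_mem _ _ (h t (by simpa using ht))

lemma zmod2_cases (a : ZMod 2) : a = 0 ∨ a = 1 := by
  revert a; decide

lemma mem_cases {M : Submodule (ZMod 2) (V → ZMod 2)} (hM : Module.finrank (ZMod 2) M ≤ 1)
    {x y : V → ZMod 2} (hx : x ∈ M) (hy : y ∈ M) (hx0 : x ≠ 0) : y = 0 ∨ y = x := by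
  by_contra hcon
  push_neg at hcon
  obtain ⟨hy0, hyx⟩ := hcon
  have hadd : ∀ z : V → ZMod 2, z + z = 0 := by
    intro z
    rw [← two_smul (ZMod 2) z, show (2 : ZMod 2) = 0 from rfl, zero_smul]
  have hli : LinearIndependent (ZMod 2) ![x, y] := by
    rw [LinearIndependent.pair_iff]
    intro s t hst
    rcases zmod2_cases s with rfl | rfl <;> rcases zmod2_cases t with rfl | rfl
    · exact ⟨rfl, rfl⟩
    · rw [zero_smul, one_smul, zero_add] at hst
      exact absurd hst hy0
    · rw [one_smul, zero_smul, add_zero] at hst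
      exact absurd hst hx0
    · rw [one_smul, one_smul] at hst
      exfalso
      apply hyx
      have h1 : y = y + (x + y) := by rw [hst, add_zero]
      have h2 : y + (x + y) = x + (y + y) := by ring
      rw [h1, h2, hadd, add_zero]
  have hrange : Set.range ![x, y] = {x, y} := by
    ext z
    constructor
    · rintro ⟨i, rfl⟩
      fin_cases i <;> simp
    · rintro (rfl | rfl)
      exacts [⟨0, rfl⟩, ⟨1, rfl⟩]
  have hspan : Submodule.span (ZMod 2) {x, y} ≤ M := by
    rw [Submodule.span_le]
    rintro z (rfl | rfl) <;> assumption
  have h2 : Module.finrank (ZMod 2) (Submodule.span (ZMod 2) (Set.range ![x, y])) = 2 := by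
    rw [finrank_span_eq_card hli]
    simp
  rw [hrange] at h2
  have := Submodule.finrank_mono hspan
  rw [h2] at this
  omega



end IsoAux
namespace IsoAux

lemma f3 (i : Fin 3) : i = 0 ∨ i = 1 ∨ i = 2 := by fin_cases i <;> simp

lemma adj_iff (A : Matrix V V (ZMod 2)) (a b : V) :
    (toSimpleGraph A).Adj a b ↔ a ≠ b ∧ A a b = 1 ∧ A b a = 1 := Iff.rfl

lemma closed_univ (A : Matrix V V (ZMod 2)) (hpre : (toSimpleGraph A).Preconnected)
    (C : Set V) (hcl : ∀ a ∈ C, ∀ b, (toSimpleGraph A).Adj a b → b ∈ C) {a : V} (ha : a ∈ C) :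
    ∀ b, b ∈ C := by
  intro b
  have hwalk : ∀ {x y : V}, (toSimpleGraph A).Walk x y → x ∈ C → y ∈ C := by
    intro x y w
    induction w with
    | nil => exact id
    | cons h p ih => exact fun hx => ih (hcl _ hx _ h)
  exact (hpre a b).elim fun w => hwalk w ha

lemma exists_neighbor (A : Matrix V V (ZMod 2)) (hconn : (toSimpleGraph A).Connected)
    (hn : 1 < Fintype.card V) (v : V) : ∃ u, u ≠ v ∧ A u v = 1 := by
  obtain ⟨u, hu⟩ := Fintype.exists_ne_of_one_lt_card hn v
  obtain ⟨w⟩ := hconn.preconnected v u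
  cases w with
  | nil => exact absurd rfl hu
  | cons h p => exact ⟨_, (Ne.symm h.1), h.2.2⟩

lemma col_ne_zero (A : Matrix V V (ZMod 2)) (hconn : (toSimpleGraph A).Connected)
    (hn : 1 < Fintype.card V) (v : V) (i : Fin 3) : iasCol A (v, i) ≠ 0 := by
  obtain ⟨u, hu, hAuv⟩ := exists_neighbor A hconn hn v
  intro h0
  rcases f3 i with rfl | rfl | rfl
  · have := congrFun h0 v
    simp [iasCol] at this
  · have := congrFun h0 u
    rw [col1_apply, hAuv] at this
    simp at this
  · have := congrFun h0 u
    rw [col2_apply, hAuv, if_neg hu] at this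
    simp at this

lemma pendant_of (A : Matrix V V (ZMod 2)) {u v : V} (huv : u ≠ v)
    (h : ∀ t, t ≠ v → (A v t = 1 ↔ t = u)) : IsPendant A v := by
  refine ⟨u, ?_⟩
  ext t
  simp only [nbhd, Set.mem_setOf_eq, Set.mem_singleton_iff]
  constructor
  · rintro ⟨ht, hA1⟩
    exact (h t ht).mp hA1
  · intro h1
    rw [h1]
    exact ⟨huv, (h u huv).mpr rfl⟩

lemma twins_of (A : Matrix V V (ZMod 2)) {u v : V} (huv : u ≠ v)
    (h : ∀ t, t ≠ u → t ≠ v → A u t = A v t) : HasTwins A := by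
  refine ⟨u, v, huv, ?_⟩
  ext t
  simp only [nbhd, Set.mem_diff, Set.mem_setOf_eq, Set.mem_singleton_iff]
  constructor
  · rintro ⟨⟨h1, h2⟩, h3⟩
    exact ⟨⟨h3, by rw [← h t h1 h3]; exact h2⟩, h1⟩
  · rintro ⟨⟨h1, h2⟩, h3⟩
    exact ⟨⟨h3, by rw [h t h3 h1]; exact h2⟩, h1⟩

lemma zmod2_eq_zero (a : ZMod 2) (h : a ≠ 1) : a = 0 := by
  rcases zmod2_cases a with rfl | rfl
  · rfl
  · exact absurd rfl h

lemma pend_or_twins (A : Matrix V V (ZMod 2)) (hA : A.IsSymm) {u v : V} (i j : Fin 3)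
    (huv : u ≠ v) (h : iasCol A (u, i) = iasCol A (v, j)) :
    (∃ w, IsPendant A w) ∨ HasTwins A := by
  have hsym : ∀ a b, A a b = A b a := fun a b => hA.apply b a
  -- pendant helper: col0 u = (χ or ψ) of v gives pendant v
  have hpend : ∀ (u v : V) (j : Fin 3), u ≠ v → j ≠ 0 →
      Pi.single u (1 : ZMod 2) = iasCol A (v, j) → IsPendant A v := by
    intro u v j huv hj hcol
    apply pendant_of A huv
    intro t ht
    have hc := congrFun hcol t
    rcases f3 j with rfl | rfl | rfl
    · exact absurd rfl hj
    · rw [col1_apply, Pi.single_apply] at hc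
      rw [hsym v t, ← hc]
      constructor
      · intro h1
        by_contra hne
        rw [if_neg hne] at h1
        exact zero_ne_one h1
      · intro h1
        rw [if_pos h1]
    · rw [col2_apply, Pi.single_apply, if_neg ht] at hc
      rw [add_zero] at hc
      rw [hsym v t, ← hc]
      constructor
      · intro h1
        by_contra hne
        rw [if_neg hne] at h1
        exact zero_ne_one h1
      · intro h1
        rw [if_pos h1]
  -- twins helper
  have htwins : ∀ (i j : Fin 3), i ≠ 0 → j ≠ 0 →
      iasCol A (u, i) = iasCol A (v, j) → HasTwins A := by
    intro i j hi hj hcol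
    apply twins_of A huv
    intro t htu htv
    have hc := congrFun hcol t
    have h1 : iasCol A (u, i) t = A t u := by
      rcases f3 i with rfl | rfl | rfl
      · exact absurd rfl hi
      · exact col1_apply A u t
      · rw [col2_apply, if_neg htu, add_zero]
    have h2 : iasCol A (v, j) t = A t v := by
      rcases f3 j with rfl | rfl | rfl
      · exact absurd rfl hj
      · exact col1_apply A v t
      · rw [col2_apply, if_neg htv, add_zero]
    rw [hsym u t, hsym v t, ← h1, ← h2, hc]
  by_cases hi : i = 0 <;> by_cases hj : j = 0
  · subst hi; subst hj
    exfalso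
    have := congrFun h u
    rw [col0, col0, Pi.single_apply, Pi.single_apply, if_pos rfl, if_neg huv] at this
    exact one_ne_zero this
  · subst hi
    rw [col0] at h
    exact Or.inl ⟨v, hpend u v j huv hj h⟩
  · subst hj
    rw [col0] at h
    exact Or.inl ⟨u, hpend v u i (Ne.symm huv) hi h.symm⟩
  · exact Or.inr (htwins i j hi hj h)

def Lone (S : Set (V × Fin 3)) (v : V) (i : Fin 3) : Prop :=
  (v, i) ∈ S ∧ (v, i + 1) ∉ S ∧ (v, i + 2) ∉ S

def PureIn (S : Set (V × Fin 3)) (v : V) : Prop := ∀ i, (v, i) ∈ S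

lemma not_pure_both {S : Set (V × Fin 3)} {v : V} (h1 : PureIn S v) (h2 : PureIn Sᶜ v) :
    False := h2 0 (h1 0)

lemma classify (S : Set (V × Fin 3)) (v : V) :
    PureIn S v ∨ PureIn Sᶜ v ∨ (∃ i, Lone S v i) ∨ (∃ i, Lone Sᶜ v i) := by
  by_cases h0 : (v, (0 : Fin 3)) ∈ S <;> by_cases h1 : (v, (1 : Fin 3)) ∈ S <;>
    by_cases h2 : (v, (2 : Fin 3)) ∈ S
  · left
    intro i
    rcases f3 i with rfl | rfl | rfl <;> assumption
  · right; right; right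
    refine ⟨2, ?_, ?_, ?_⟩ <;>
      simp [show (2 : Fin 3) + 1 = 0 by decide, show (2 : Fin 3) + 2 = 1 by decide, h0, h1, h2]
  · right; right; right
    refine ⟨1, ?_, ?_, ?_⟩ <;>
      simp [show (1 : Fin 3) + 1 = 2 by decide, show (1 : Fin 3) + 2 = 0 by decide, h0, h1, h2]
  · right; right; left
    refine ⟨0, ?_, ?_, ?_⟩ <;>
      simp [show (0 : Fin 3) + 1 = 1 by decide, show (0 : Fin 3) + 2 = 2 by decide, h0, h1, h2]
  · right; right; right
    refine ⟨0, ?_, ?_, ?_⟩ <;>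
      simp [show (0 : Fin 3) + 1 = 1 by decide, show (0 : Fin 3) + 2 = 2 by decide, h0, h1, h2]
  · right; right; left
    refine ⟨1, ?_, ?_, ?_⟩ <;>
      simp [show (1 : Fin 3) + 1 = 2 by decide, show (1 : Fin 3) + 2 = 0 by decide, h0, h1, h2]
  · right; right; left
    refine ⟨2, ?_, ?_, ?_⟩ <;>
      simp [show (2 : Fin 3) + 1 = 0 by decide, show (2 : Fin 3) + 2 = 1 by decide, h0, h1, h2]
  · right; left
    intro i
    rcases f3 i with rfl | rfl | rfl <;> simpa

lemma lone_mem (A : Matrix V V (ZMod 2)) {S : Set (V × Fin 3)} {v : V} {i : Fin 3}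
    (h : Lone S v i) : iasCol A (v, i) ∈ USp A S ⊓ USp A Sᶜ := by
  refine ⟨mem_USp A h.1, ?_⟩
  rw [col_cycle]
  exact add_mem (mem_USp A h.2.1) (mem_USp A h.2.2)

lemma lone_mem' (A : Matrix V V (ZMod 2)) {S : Set (V × Fin 3)} {v : V} {i : Fin 3}
    (h : Lone Sᶜ v i) : iasCol A (v, i) ∈ USp A S ⊓ USp A Sᶜ := by
  have := lone_mem A (S := Sᶜ) h
  rw [compl_compl] at this
  exact ⟨this.2, this.1⟩

lemma mem_self {S : Set (V × Fin 3)} {p : V × Fin 3} (h : (p.1, p.2) ∈ S) : p ∈ S := by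
  rwa [Prod.mk.eta] at h

lemma pure_case (A : Matrix V V (ZMod 2)) (hA : A.IsSymm)
    (hpre : (toSimpleGraph A).Preconnected) (S : Set (V × Fin 3))
    (hrk : Module.finrank (ZMod 2) ↥(USp A S ⊓ USp A Sᶜ) ≤ 1)
    (hp : ∀ v, PureIn S v ∨ PureIn Sᶜ v) : S = ∅ ∨ Sᶜ = ∅ := by
  set X := {v | PureIn S v} with hX
  have hmemS : ∀ p : V × Fin 3, p ∈ S → p.1 ∈ X := by
    intro p hpS
    rcases hp p.1 with h | h
    · exact h
    · exact absurd (mem_self (h p.2)) (by simpa using hpS)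
  have hmemC : ∀ p : V × Fin 3, p ∈ Sᶜ → p.1 ∉ X := by
    intro p hpC hXp
    exact hpC (mem_self (hXp p.2))
  have hsingleX : ∀ t ∈ X, Pi.single t (1 : ZMod 2) ∈ USp A S := fun t ht =>
    single_mem A (ht 0)
  have hsingleXc : ∀ t ∈ Xᶜ, Pi.single t (1 : ZMod 2) ∈ USp A Sᶜ := by
    intro t ht
    rcases hp t with h | h
    · exact absurd h ht
    · exact single_mem A (h 0)
  have hcolX : ∀ x ∈ X, iasCol A (x, 1) ∈ USp A S := fun x hx => mem_USp A (hx 1)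
  have hcolXc : ∀ y ∈ Xᶜ, iasCol A (y, 1) ∈ USp A Sᶜ := by
    intro y hy
    rcases hp y with h | h
    · exact absurd h hy
    · exact mem_USp A (h 1)
  have hsplit : ∀ f : V → ZMod 2, Xᶜ.indicator f = f - X.indicator f := by
    intro f
    funext w
    by_cases hw : w ∈ X <;> simp [Set.indicator_apply, hw]
  have hQ : ∀ x ∈ X, Xᶜ.indicator (iasCol A (x, 1)) ∈ USp A S ⊓ USp A Sᶜ := by
    intro x hx
    constructor
    · rw [hsplit]
      exact sub_mem (hcolX x hx) (indicator_mem _ _ _ hsingleX)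
    · exact indicator_mem _ _ _ hsingleXc
  have hP : ∀ y ∈ Xᶜ, X.indicator (iasCol A (y, 1)) ∈ USp A S ⊓ USp A Sᶜ := by
    intro y hy
    constructor
    · exact indicator_mem _ _ _ hsingleX
    · have h2 : X.indicator (iasCol A (y, 1)) = iasCol A (y, 1) - Xᶜ.indicator (iasCol A (y, 1)) := by
        rw [hsplit]
        abel
      rw [h2]
      exact sub_mem (hcolXc y hy) (indicator_mem _ _ _ hsingleXc)
  by_cases hQ0 : ∀ x ∈ X, Xᶜ.indicator (iasCol A (x, 1)) = 0
  · -- no edges from X to outside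
    have hcross : ∀ x ∈ X, ∀ t, t ∉ X → A t x = 0 := by
      intro x hx t ht
      have := congrFun (hQ0 x hx) t
      rw [Set.indicator_of_mem (show t ∈ Xᶜ from ht), col1_apply] at this
      simpa using this
    rcases Set.eq_empty_or_nonempty X with hXe | ⟨x0, hx0⟩
    · left
      rw [Set.eq_empty_iff_forall_notMem]
      intro p hpS
      rw [Set.eq_empty_iff_forall_notMem] at hXe
      exact hXe p.1 (hmemS p hpS)
    · right
      rw [Set.eq_empty_iff_forall_notMem]
      intro q hqC
      have hcl : ∀ a ∈ X, ∀ b, (toSimpleGraph A).Adj a b → b ∈ X := by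
        intro a ha b hadj
        by_contra hb
        have := hcross a ha b hb
        rw [hadj.2.2] at this
        exact one_ne_zero this
      exact hmemC q hqC (closed_univ A hpre X hcl hx0 q.1)
  · push_neg at hQ0
    obtain ⟨x0, hx0, hne⟩ := hQ0
    exfalso
    have hall : ∀ y ∈ Xᶜ, X.indicator (iasCol A (y, 1)) = 0 := by
      intro y hy
      rcases mem_cases hrk (hQ x0 hx0) (hP y hy) hne with h | h
      · exact h
      · exfalso
        obtain ⟨w, hw⟩ : ∃ w, Xᶜ.indicator (iasCol A (x0, 1)) w ≠ 0 := by
          by_contra hc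
          push_neg at hc
          exact hne (funext hc)
        have hwXc : w ∈ Xᶜ := by
          by_contra hwX
          exact hw (Set.indicator_of_notMem hwX _)
        have := congrFun h w
        rw [Set.indicator_of_notMem (show w ∉ X from hwXc)] at this
        exact hw this.symm
    have hcross : ∀ y, y ∉ X → ∀ t ∈ X, A t y = 0 := by
      intro y hy t ht
      have := congrFun (hall y hy) t
      rw [Set.indicator_of_mem ht, col1_apply] at this
      simpa using this
    have hXcne : (Xᶜ : Set V).Nonempty := by
      rcases Set.eq_empty_or_nonempty (Xᶜ : Set V) with he | hne'
      · exfalso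
        apply hne
        funext w
        rw [he]
        simp
      · exact hne'
    obtain ⟨y0, hy0⟩ := hXcne
    have hcl : ∀ a ∈ Xᶜ, ∀ b, (toSimpleGraph A).Adj a b → b ∈ Xᶜ := by
      intro a ha b hadj
      by_contra hb
      rw [Set.notMem_compl_iff] at hb
      have := hcross a ha b hb
      rw [hadj.2.2] at this
      exact one_ne_zero this
    exact (closed_univ A hpre Xᶜ hcl hy0 x0) hx0

lemma conn_sep (A : Matrix V V (ZMod 2)) (hA : A.IsSymm)
    (hconn : (toSimpleGraph A).Connected) (hn : 1 < Fintype.card V)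
    (S : Set (V × Fin 3)) (hl : iasLambda A S = 0) : S = ∅ ∨ Sᶜ = ∅ := by
  have hfr : Module.finrank (ZMod 2) ↥(USp A S ⊓ USp A Sᶜ) = 0 := by
    rw [← lambda_eq]; exact hl
  have hbot : USp A S ⊓ USp A Sᶜ = ⊥ := Submodule.finrank_eq_zero.mp hfr
  have hp : ∀ v, PureIn S v ∨ PureIn Sᶜ v := by
    intro v
    rcases classify S v with h | h | ⟨i, hi⟩ | ⟨i, hi⟩
    · exact Or.inl h
    · exact Or.inr h
    · exfalso
      have := lone_mem A hi
      rw [hbot] at this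
      exact col_ne_zero A hconn hn v i (Submodule.mem_bot _ |>.mp this)
    · exfalso
      have := lone_mem' A hi
      rw [hbot] at this
      exact col_ne_zero A hconn hn v i (Submodule.mem_bot _ |>.mp this)
  exact pure_case A hA hconn.preconnected S (by rw [hfr]; omega) hp

lemma f3full : ∀ a b : Fin 3, a = b ∨ a = b + 1 ∨ a = b + 2 := by decide

lemma case_B (A : Matrix V V (ZMod 2)) (hA : A.IsSymm)
    (hconn : (toSimpleGraph A).Connected) (hn : 1 < Fintype.card V)
    (S : Set (V × Fin 3))
    (hrk : Module.finrank (ZMod 2) ↥(USp A S ⊓ USp A Sᶜ) ≤ 1)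
    (v : V) (i : Fin 3) (hlone : Lone S v i)
    (hoth : ∀ u, u ≠ v → PureIn S u ∨ PureIn Sᶜ u) :
    ∀ p ∈ S, p = (v, i) := by
  have hsym : ∀ a b, A a b = A b a := fun a b => hA.apply b a
  set z := iasCol A (v, i) with hzdef
  have hz : z ∈ USp A S ⊓ USp A Sᶜ := lone_mem A hlone
  have hz0 : z ≠ 0 := col_ne_zero A hconn hn v i
  set X := {u | u ≠ v ∧ PureIn S u} with hXdef
  set Y := {u | u ≠ v ∧ PureIn Sᶜ u} with hYdef
  have hXv : v ∉ X := fun h => h.1 rfl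
  have hYv : v ∉ Y := fun h => h.1 rfl
  have hXY : ∀ w ∈ X, w ∉ Y := fun w hw hw' => not_pure_both hw.2 hw'.2
  have hYX : ∀ w ∈ Y, w ∉ X := fun w hw hw' => not_pure_both hw'.2 hw.2
  have hcov : ∀ w, w = v ∨ w ∈ X ∨ w ∈ Y := by
    intro w
    by_cases hwv : w = v
    · exact Or.inl hwv
    · rcases hoth w hwv with h | h
      · exact Or.inr (Or.inl ⟨hwv, h⟩)
      · exact Or.inr (Or.inr ⟨hwv, h⟩)
  have hsX : ∀ t ∈ X, Pi.single t (1 : ZMod 2) ∈ USp A S := fun t ht =>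
    single_mem A (ht.2 0)
  have hsY : ∀ t ∈ Y, Pi.single t (1 : ZMod 2) ∈ USp A Sᶜ := fun t ht =>
    single_mem A (ht.2 0)
  have hcX : ∀ t ∈ X, iasCol A (t, 1) ∈ USp A S := fun t ht => mem_USp A (ht.2 1)
  have hcY : ∀ t ∈ Y, iasCol A (t, 1) ∈ USp A Sᶜ := fun t ht => mem_USp A (ht.2 1)
  have hYind : ∀ f : V → ZMod 2,
      Y.indicator f = f - X.indicator f - f v • (Pi.single v 1 : V → ZMod 2) := by
    intro f
    funext w
    simp only [Pi.sub_apply, Pi.smul_apply, Pi.single_apply, smul_eq_mul]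
    rcases hcov w with rfl | hw | hw
    · rw [Set.indicator_of_notMem hYv, Set.indicator_of_notMem hXv, if_pos rfl]
      ring
    · rw [Set.indicator_of_notMem (hXY w hw), Set.indicator_of_mem hw,
        if_neg hw.1]
      ring
    · rw [Set.indicator_of_mem hw, Set.indicator_of_notMem (hYX w hw),
        if_neg hw.1]
      ring
  have hXind : ∀ f : V → ZMod 2,
      X.indicator f = f - Y.indicator f - f v • (Pi.single v 1 : V → ZMod 2) := by
    intro f
    rw [hYind f]
    abel
  have hWind : ∀ f : V → ZMod 2,
      f - X.indicator f = Y.indicator f + f v • (Pi.single v 1 : V → ZMod 2) := by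
    intro f
    rw [hYind f]
    abel
  have hXempty : X = ∅ := by
    by_cases hi0 : i = 0
    · -- the lone column is φ(v) = e_v
      subst hi0
      have hzs : z = Pi.single v 1 := by rw [hzdef, col0]
      have hp1 : (v, (1 : Fin 3)) ∈ Sᶜ := by
        have := hlone.2.1
        simpa using this
      have hp2 : (v, (2 : Fin 3)) ∈ Sᶜ := by
        have := hlone.2.2
        simpa using this
      have hsvS : Pi.single v (1 : ZMod 2) ∈ USp A S := hzs ▸ hz.1
      have hsvC : Pi.single v (1 : ZMod 2) ∈ USp A Sᶜ := hzs ▸ hz.2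
      -- no edges X–Y
      have hQx : ∀ x ∈ X, Y.indicator (iasCol A (x, 1)) = 0 := by
        intro x hx
        have hmem : Y.indicator (iasCol A (x, 1)) ∈ USp A S ⊓ USp A Sᶜ := by
          constructor
          · rw [hYind]
            exact sub_mem (sub_mem (hcX x hx) (indicator_mem _ _ _ hsX))
              (Submodule.smul_mem _ _ hsvS)
          · exact indicator_mem _ _ _ hsY
        rcases mem_cases hrk hz hmem hz0 with h | h
        · exact h
        · exfalso
          have := congrFun h v
          rw [Set.indicator_of_notMem hYv, hzs, Pi.single_apply, if_pos rfl] at this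
          exact zero_ne_one this
      have hcrossXY : ∀ x ∈ X, ∀ t ∈ Y, A t x = 0 := by
        intro x hx t ht
        have := congrFun (hQx x hx) t
        rw [Set.indicator_of_mem ht, col1_apply] at this
        simpa using this
      have hPv : X.indicator (iasCol A (v, 1)) = 0 := by
        have hmem : X.indicator (iasCol A (v, 1)) ∈ USp A S ⊓ USp A Sᶜ := by
          constructor
          · exact indicator_mem _ _ _ hsX
          · rw [hXind]
            exact sub_mem (sub_mem (mem_USp A hp1) (indicator_mem _ _ _ hsY))
              (Submodule.smul_mem _ _ hsvC)
        rcases mem_cases hrk hz hmem hz0 with h | h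
        · exact h
        · exfalso
          have := congrFun h v
          rw [Set.indicator_of_notMem hXv, hzs, Pi.single_apply, if_pos rfl] at this
          exact zero_ne_one this
      have hcrossXv : ∀ t ∈ X, A t v = 0 := by
        intro t ht
        have := congrFun hPv t
        rw [Set.indicator_of_mem ht, col1_apply] at this
        simpa using this
      rcases Set.eq_empty_or_nonempty X with hXe | ⟨x0, hx0⟩
      · exact hXe
      · exfalso
        have hcl : ∀ a ∈ X, ∀ b, (toSimpleGraph A).Adj a b → b ∈ X := by
          intro a ha b hadj
          rcases hcov b with rfl | hb | hb
          · exfalso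
            have h1 := hcrossXv a ha
            rw [hsym a b] at h1
            rw [hadj.2.2] at h1
            exact one_ne_zero h1
          · exact hb
          · exfalso
            have h1 := hcrossXY a ha b hb
            rw [hadj.2.2] at h1
            exact one_ne_zero h1
        exact hXv (closed_univ A hconn.preconnected X hcl hx0 v)
    · -- the lone column is χ(v) or ψ(v)
      have h0c : (v, (0 : Fin 3)) ∈ Sᶜ := by
        have hcase : (0 : Fin 3) = i + 1 ∨ (0 : Fin 3) = i + 2 := by
          revert hi0
          rcases f3 i with rfl | rfl | rfl <;> decide
        rcases hcase with h | h
        · rw [h]; exact hlone.2.1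
        · rw [h]; exact hlone.2.2
      have hev : Pi.single v (1 : ZMod 2) ∈ USp A Sᶜ := single_mem A h0c
      have zc : ∀ w, w ≠ v → z w = A w v := by
        intro w hw
        rcases f3 i with rfl | rfl | rfl
        · exact absurd rfl hi0
        · exact col1_apply A v w
        · rw [hzdef, col2_apply, if_neg hw, add_zero]
      have hPy : ∀ y ∈ Y, X.indicator (iasCol A (y, 1)) ∈ USp A S ⊓ USp A Sᶜ := by
        intro y hy
        constructor
        · exact indicator_mem _ _ _ hsX
        · rw [hXind]
          exact sub_mem (sub_mem (hcY y hy) (indicator_mem _ _ _ hsY))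
            (Submodule.smul_mem _ _ hev)
      have hWx : ∀ x ∈ X,
          iasCol A (x, 1) - X.indicator (iasCol A (x, 1)) ∈ USp A S ⊓ USp A Sᶜ := by
        intro x hx
        constructor
        · exact sub_mem (hcX x hx) (indicator_mem _ _ _ hsX)
        · rw [hWind]
          exact add_mem (indicator_mem _ _ _ hsY) (Submodule.smul_mem _ _ hev)
      have wcoord : ∀ x : V, ∀ t, t ∉ X →
          (iasCol A (x, 1) - X.indicator (iasCol A (x, 1))) t = A t x := by
        intro x t ht
        rw [Pi.sub_apply, Set.indicator_of_notMem ht, sub_zero, col1_apply]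
      by_cases hw0 : ∀ x ∈ X, iasCol A (x, 1) - X.indicator (iasCol A (x, 1)) = 0
      · have hcross : ∀ x ∈ X, ∀ t, t ∉ X → A t x = 0 := by
          intro x hx t ht
          have := congrFun (hw0 x hx) t
          rw [wcoord x t ht] at this
          simpa using this
        rcases Set.eq_empty_or_nonempty X with hXe | ⟨x0, hx0⟩
        · exact hXe
        · exfalso
          have hcl : ∀ a ∈ X, ∀ b, (toSimpleGraph A).Adj a b → b ∈ X := by
            intro a ha b hadj
            by_contra hb
            have h1 := hcross a ha b hb
            rw [hadj.2.2] at h1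
            exact one_ne_zero h1
          exact hXv (closed_univ A hconn.preconnected X hcl hx0 v)
      · exfalso
        push_neg at hw0
        obtain ⟨x0, hx0, hne⟩ := hw0
        have hzx : iasCol A (x0, 1) - X.indicator (iasCol A (x0, 1)) = z := by
          rcases mem_cases hrk hz (hWx x0 hx0) hz0 with h | h
          · exact absurd h hne
          · exact h
        have hzX0 : ∀ t ∈ X, z t = 0 := by
          intro t ht
          have := congrFun hzx t
          rw [Pi.sub_apply, Set.indicator_of_mem ht, sub_self] at this
          exact this.symm
        have hPy0 : ∀ y ∈ Y, X.indicator (iasCol A (y, 1)) = 0 := by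
          intro y hy
          rcases mem_cases hrk hz (hPy y hy) hz0 with h | h
          · exact h
          · exfalso
            apply hz0
            funext w
            by_cases hwX : w ∈ X
            · rw [hzX0 w hwX]; rfl
            · rw [← h, Set.indicator_of_notMem hwX]; rfl
        have hcrossYX : ∀ y ∈ Y, ∀ t ∈ X, A t y = 0 := by
          intro y hy t ht
          have := congrFun (hPy0 y hy) t
          rw [Set.indicator_of_mem ht, col1_apply] at this
          simpa using this
        have hYind0 : Y.indicator (iasCol A (x0, 1)) = 0 := by
          funext t
          by_cases htY : t ∈ Y
          · rw [Set.indicator_of_mem htY, col1_apply, hsym t x0,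
              hcrossYX t htY x0 hx0]
            rfl
          · rw [Set.indicator_of_notMem htY]; rfl
        have hzev : z = A v x0 • (Pi.single v 1 : V → ZMod 2) := by
          rw [← hzx, hWind, hYind0, zero_add, col1_apply]
        have hAvx : A v x0 = 1 := by
          rcases zmod2_cases (A v x0) with h | h
          · exfalso
            apply hz0
            rw [hzev, h, zero_smul]
          · exact h
        have h1 : z x0 = 0 := by
          rw [hzev, Pi.smul_apply, Pi.single_apply, if_neg hx0.1, smul_zero]
        rw [zc x0 hx0.1, hsym x0 v, hAvx] at h1
        exact one_ne_zero h1
  intro p hpS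
  have hp1 : p.1 = v := by
    by_contra hne
    rcases hoth p.1 hne with h | h
    · have : p.1 ∈ X := ⟨hne, h⟩
      rw [hXempty] at this
      exact this
    · exact (h p.2) (mem_self hpS)
  have hp2 : p.2 = i := by
    rcases f3full p.2 i with h | h | h
    · exact h
    · exfalso
      apply hlone.2.1
      have : p = (v, i + 1) := Prod.ext hp1 h
      rwa [this] at hpS
    · exfalso
      apply hlone.2.2
      have : p = (v, i + 2) := Prod.ext hp1 h
      rwa [this] at hpS
  exact Prod.ext hp1 hp2

lemma main_sep (A : Matrix V V (ZMod 2)) (hA : A.IsSymm)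
    (hconn : (toSimpleGraph A).Connected) (hn : 1 < Fintype.card V)
    (hpend : ¬ ∃ w, IsPendant A w) (htw : ¬ HasTwins A)
    (S : Set (V × Fin 3)) (hl : iasLambda A S ≤ 1) :
    S.Subsingleton ∨ Sᶜ.Subsingleton := by
  have hrk : Module.finrank (ZMod 2) ↥(USp A S ⊓ USp A Sᶜ) ≤ 1 := by
    rw [← lambda_eq]; exact hl
  by_cases hlone : ∃ v, (∃ i, Lone S v i) ∨ (∃ i, Lone Sᶜ v i)
  · obtain ⟨v, hv⟩ := hlone
    -- the lone column of v
    obtain ⟨iv, hziv⟩ : ∃ iv, iasCol A (v, iv) ∈ USp A S ⊓ USp A Sᶜ := by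
      rcases hv with ⟨i, hi⟩ | ⟨i, hi⟩
      · exact ⟨i, lone_mem A hi⟩
      · exact ⟨i, lone_mem' A hi⟩
    have hoth : ∀ u, u ≠ v → PureIn S u ∨ PureIn Sᶜ u := by
      intro u hu
      rcases classify S u with h | h | ⟨j, hj⟩ | ⟨j, hj⟩
      · exact Or.inl h
      · exact Or.inr h
      · exfalso
        have hzu := lone_mem A hj
        have heq : iasCol A (u, j) = iasCol A (v, iv) := by
          rcases mem_cases hrk hziv hzu (col_ne_zero A hconn hn v iv) with h0 | h0
          · exact absurd h0 (col_ne_zero A hconn hn u j)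
          · exact h0
        rcases pend_or_twins A hA j iv hu heq with hp | ht
        · exact hpend hp
        · exact htw ht
      · exfalso
        have hzu := lone_mem' A hj
        have heq : iasCol A (u, j) = iasCol A (v, iv) := by
          rcases mem_cases hrk hziv hzu (col_ne_zero A hconn hn v iv) with h0 | h0
          · exact absurd h0 (col_ne_zero A hconn hn u j)
          · exact h0
        rcases pend_or_twins A hA j iv hu heq with hp | ht
        · exact hpend hp
        · exact htw ht
    rcases hv with ⟨i, hi⟩ | ⟨i, hi⟩
    · left
      intro p hp q hq
      rw [case_B A hA hconn hn S hrk v i hi hoth p hp,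
        case_B A hA hconn hn S hrk v i hi hoth q hq]
    · right
      have hrk' : Module.finrank (ZMod 2) ↥(USp A Sᶜ ⊓ USp A Sᶜᶜ) ≤ 1 := by
        rw [compl_compl, inf_comm]
        exact hrk
      have hoth' : ∀ u, u ≠ v → PureIn Sᶜ u ∨ PureIn Sᶜᶜ u := by
        intro u hu
        rcases hoth u hu with h | h
        · right
          rw [compl_compl]
          exact h
        · exact Or.inl h
      intro p hp q hq
      rw [case_B A hA hconn hn Sᶜ hrk' v i hi hoth' p hp,
        case_B A hA hconn hn Sᶜ hrk' v i hi hoth' q hq]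
  · push_neg at hlone
    have hp : ∀ v, PureIn S v ∨ PureIn Sᶜ v := by
      intro v
      rcases classify S v with h | h | ⟨j, hj⟩ | ⟨j, hj⟩
      · exact Or.inl h
      · exact Or.inr h
      · exact absurd hj ((hlone v).1 j)
      · exact absurd hj ((hlone v).2 j)
    rcases pure_case A hA hconn.preconnected S hrk hp with h | h
    · left; rw [h]; exact Set.subsingleton_empty
    · right; rw [h]; exact Set.subsingleton_empty

-- triple sets
lemma ncard_triple (v : V) :
    ({((v, 0) : V × Fin 3), (v, 1), (v, 2)} : Set (V × Fin 3)).ncard = 3 := by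
  rw [Set.ncard_insert_of_notMem (by simp) (Set.toFinite _),
    Set.ncard_insert_of_notMem (by simp), Set.ncard_singleton]

lemma rank_triple_le (A : Matrix V V (ZMod 2)) (v : V) :
    iasRank A ({((v, 0) : V × Fin 3), (v, 1), (v, 2)} : Set (V × Fin 3)) ≤ 2 := by
  have himg : iasCol A '' {((v, 0) : V × Fin 3), (v, 1), (v, 2)} =
      {iasCol A (v, 0), iasCol A (v, 1), iasCol A (v, 2)} := by
    rw [Set.image_insert_eq, Set.image_insert_eq, Set.image_singleton]
  have hle : Submodule.span (ZMod 2) (iasCol A '' {((v, 0) : V × Fin 3), (v, 1), (v, 2)}) ≤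
      Submodule.span (ZMod 2) {iasCol A (v, 0), iasCol A (v, 1)} := by
    rw [himg, Submodule.span_le]
    rintro c (rfl | rfl | rfl)
    · exact Submodule.subset_span (by simp)
    · exact Submodule.subset_span (by simp)
    · rw [col_cycle A v 2, show (2 : Fin 3) + 1 = 0 by decide, show (2 : Fin 3) + 2 = 1 by decide]
      exact add_mem (Submodule.subset_span (by simp)) (Submodule.subset_span (by simp))
  calc iasRank A ({((v, 0) : V × Fin 3), (v, 1), (v, 2)} : Set (V × Fin 3))
      ≤ Module.finrank (ZMod 2)
        ↥(Submodule.span (ZMod 2) {iasCol A (v, 0), iasCol A (v, 1)}) :=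
        Submodule.finrank_mono hle
    _ ≤ ({iasCol A (v, 0), iasCol A (v, 1)} : Set (V → ZMod 2)).toFinset.card :=
        finrank_span_le_card _
    _ ≤ 2 := by
        rw [Set.toFinset_insert, Set.toFinset_singleton]
        exact (Finset.card_insert_le _ _).trans (by simp)

lemma triple_dep (A : Matrix V V (ZMod 2)) (v : V) {S : Set (V × Fin 3)}
    (h : ∀ j : Fin 3, (v, j) ∈ S) : ¬ iasIndep A S := by
  intro hind
  have hsub : ({((v, 0) : V × Fin 3), (v, 1), (v, 2)} : Set (V × Fin 3)) ⊆ S := by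
    rintro p (rfl | rfl | rfl) <;> exact h _
  have := indep_mono A hsub hind
  refine dep_of_card A ?_ this
  have h1 := rank_triple_le A v
  rw [ncard_triple]
  omega

-- sInf helpers
lemma tau_le (A : Matrix V V (ZMod 2)) {k : ℕ} (h : ∃ S, OrdinarySep A k S) :
    iasTau A ≤ k := sInf_le ⟨k, rfl, h⟩

lemma tau_ge (A : Matrix V V (ZMod 2)) {k : ℕ}
    (h : ∀ m, m < k → ¬ ∃ S, OrdinarySep A m S) : (k : ℕ∞) ≤ iasTau A := by
  apply le_sInf
  rintro b ⟨m, rfl, hm⟩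
  by_contra hlt
  push_neg at hlt
  have hmk : m < k := by exact_mod_cast hlt
  exact h m hmk hm

lemma kappa_le (A : Matrix V V (ZMod 2)) {k : ℕ}
    (h : (∃ S, CyclicSep A k S) ∨ k = 3 * Fintype.card V - iasRank A Set.univ) :
    iasKappaStar A ≤ k := by
  apply Nat.sInf_le
  rcases h with h | h
  · exact Or.inl h
  · exact Or.inr h

lemma kappa_ge (A : Matrix V V (ZMod 2)) {k : ℕ}
    (h1 : ∀ m, m < k → ¬ ∃ S, CyclicSep A m S)
    (h2 : k ≤ 3 * Fintype.card V - iasRank A Set.univ) : k ≤ iasKappaStar A := by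
  have hne : ({k | ∃ S, CyclicSep A k S} ∪
      {3 * Fintype.card V - iasRank A Set.univ} : Set ℕ).Nonempty :=
    ⟨3 * Fintype.card V - iasRank A Set.univ, Or.inr rfl⟩
  refine le_csInf hne ?_
  rintro b (hb | hb)
  · by_contra hlt
    push_neg at hlt
    exact h1 b hlt hb
  · rw [Set.mem_singleton_iff] at hb
    omega

-- no small separations
lemma no_ord_one (A : Matrix V V (ZMod 2)) (hA : A.IsSymm)
    (hconn : (toSimpleGraph A).Connected) (hn : 1 < Fintype.card V) :
    ¬ ∃ S, OrdinarySep A 1 S := by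
  rintro ⟨S, h0, hl, hS, hSc⟩
  have hl0 : iasLambda A S = 0 := by omega
  rcases conn_sep A hA hconn hn S hl0 with rfl | h
  · rw [Set.ncard_empty] at hS
    omega
  · rw [h, Set.ncard_empty] at hSc
    omega

lemma no_cyc_one (A : Matrix V V (ZMod 2)) (hA : A.IsSymm)
    (hconn : (toSimpleGraph A).Connected) (hn : 1 < Fintype.card V) :
    ¬ ∃ S, CyclicSep A 1 S := by
  rintro ⟨S, h0, hl, hS, hSc⟩
  have hl0 : iasLambda A S = 0 := by omega
  rcases conn_sep A hA hconn hn S hl0 with rfl | h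
  · exact hS (indep_empty A)
  · rw [h] at hSc
    exact hSc (indep_empty A)

lemma no_ord_two (A : Matrix V V (ZMod 2)) (hA : A.IsSymm)
    (hconn : (toSimpleGraph A).Connected) (hn : 1 < Fintype.card V)
    (hpend : ¬ ∃ w, IsPendant A w) (htw : ¬ HasTwins A) :
    ¬ ∃ S, OrdinarySep A 2 S := by
  rintro ⟨S, h0, hl, hS, hSc⟩
  have hl1 : iasLambda A S ≤ 1 := by omega
  rcases main_sep A hA hconn hn hpend htw S hl1 with h | h
  · have := (Set.ncard_le_one (Set.toFinite S)).mpr h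
    omega
  · have := (Set.ncard_le_one (Set.toFinite Sᶜ)).mpr h
    omega

lemma col_ne_zero' (A : Matrix V V (ZMod 2)) (hconn : (toSimpleGraph A).Connected)
    (hn : 1 < Fintype.card V) (p : V × Fin 3) : iasCol A p ≠ 0 := by
  have := col_ne_zero A hconn hn p.1 p.2
  rwa [Prod.mk.eta] at this

lemma no_cyc_two (A : Matrix V V (ZMod 2)) (hA : A.IsSymm)
    (hconn : (toSimpleGraph A).Connected) (hn : 1 < Fintype.card V)
    (hpend : ¬ ∃ w, IsPendant A w) (htw : ¬ HasTwins A) :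
    ¬ ∃ S, CyclicSep A 2 S := by
  rintro ⟨S, h0, hl, hS, hSc⟩
  have hl1 : iasLambda A S ≤ 1 := by omega
  rcases main_sep A hA hconn hn hpend htw S hl1 with h | h
  · exact hS (indep_of_subsingleton A h fun p _ => col_ne_zero' A hconn hn p)
  · exact hSc (indep_of_subsingleton A h fun p _ => col_ne_zero' A hconn hn p)

lemma zmod2_add_one {a e : ZMod 2} (h : a ≠ e) : a + 1 = e := by
  revert h; revert a e; decide

lemma zmod2_eq_of_iff' : ∀ a b : ZMod 2, (a = 1 ↔ b = 1) → a = b := by decide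

lemma zmod2_eq_of_iff {a b : ZMod 2} (h : a = 1 ↔ b = 1) : a = b :=
  zmod2_eq_of_iff' a b h

lemma parallel_pair (A : Matrix V V (ZMod 2)) (hA : A.IsSymm)
    (hconn : (toSimpleGraph A).Connected) (hn : 1 < Fintype.card V)
    (hpt : (∃ v, IsPendant A v) ∨ HasTwins A) :
    ∃ p q : V × Fin 3, p.1 ≠ q.1 ∧ iasCol A p = iasCol A q ∧ iasCol A p ≠ 0 := by
  have hsym : ∀ a b, A a b = A b a := fun a b => hA.apply b a
  rcases hpt with ⟨v, w, hnb⟩ | ⟨v, w, hvw, hset⟩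
  · -- pendant v with nbhd = {w}
    have hw : w ≠ v ∧ A v w = 1 := by
      have : w ∈ nbhd A v := by rw [hnb]; rfl
      exact this
    have hmemnb : ∀ t, t ∈ nbhd A v ↔ t = w := by
      intro t; rw [hnb]; rfl
    have hAvt : ∀ t, t ≠ v → A v t = (if t = w then 1 else 0) := by
      intro t ht
      by_cases htw : t = w
      · subst htw; rw [if_pos rfl]; exact hw.2
      · rw [if_neg htw]
        apply zmod2_eq_zero
        intro h1
        exact htw ((hmemnb t).mp ⟨ht, h1⟩)
    refine ⟨(v, if A v v = 0 then 1 else 2), (w, 0), Ne.symm hw.1, ?_, ?_⟩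
    · have key : ∀ t, iasCol A (v, if A v v = 0 then 1 else 2) t = (if t = w then 1 else 0) := by
        intro t
        rcases zmod2_cases (A v v) with ha | ha
        · rw [if_pos ha, col1_apply]
          by_cases htv : t = v
          · subst htv
            rw [ha, if_neg (fun hh => hw.1 hh.symm)]
          · rw [hsym t v]
            exact hAvt t htv
        · rw [if_neg (by rw [ha]; exact one_ne_zero), col2_apply]
          by_cases htv : t = v
          · subst htv
            rw [if_pos rfl, ha, if_neg (fun hh => hw.1 hh.symm)]
            decide
          · rw [if_neg htv, add_zero, hsym t v]
            exact hAvt t htv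
      funext t
      rw [key t, col0, Pi.single_apply]
    · intro h0
      have := congrFun h0 w
      rcases zmod2_cases (A v v) with ha | ha
      · rw [if_pos ha, col1_apply, hsym w v, hw.2] at this
        exact one_ne_zero this
      · rw [if_neg (by rw [ha]; exact one_ne_zero), col2_apply, hsym w v, hw.2,
          if_neg hw.1] at this
        simp at this
  · -- twins v w
    set e := A v w with he
    have hvt : ∀ t, t ≠ v → t ≠ w → A v t = A w t := by
      intro t htv htw
      apply zmod2_eq_of_iff
      constructor
      · intro h1
        have : t ∈ nbhd A v \ {w} := ⟨⟨htv, h1⟩, htw⟩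
        rw [hset] at this
        exact this.1.2
      · intro h1
        have : t ∈ nbhd A w \ {v} := ⟨⟨htw, h1⟩, htv⟩
        rw [← hset] at this
        exact this.1.2
    have hcolgen : ∀ (u other : V), u ≠ other → A u other = e →
        ∀ t, iasCol A (u, if A u u = e then 1 else 2) t =
          (if t = u then e else A t u) := by
      intro u other huo hAuo t
      by_cases hau : A u u = e
      · rw [if_pos hau, col1_apply]
        by_cases htu : t = u
        · subst htu; rw [if_pos rfl, hau]
        · rw [if_neg htu]
      · rw [if_neg hau, col2_apply]
        by_cases htu : t = u
        · subst htu
          rw [if_pos rfl, if_pos rfl, zmod2_add_one hau]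
        · rw [if_neg htu, if_neg htu, add_zero]
    refine ⟨(v, if A v v = e then 1 else 2), (w, if A w w = e then 1 else 2), hvw, ?_, ?_⟩
    · funext t
      rw [hcolgen v w hvw rfl t, hcolgen w v (Ne.symm hvw) (by rw [hsym w v]) t]
      by_cases htv : t = v
      · subst htv
        rw [if_pos rfl, if_neg hvw]
      · by_cases htw : t = w
        · subst htw
          rw [if_neg (fun hh => hvw hh.symm), if_pos rfl, hsym t v]
        · rw [if_neg htv, if_neg htw, hsym t v, hsym t w]
          exact hvt t htv htw
    · exact col_ne_zero' A hconn hn _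

lemma pair_seps (A : Matrix V V (ZMod 2)) (hconn : (toSimpleGraph A).Connected)
    (hn : 1 < Fintype.card V) {p q : V × Fin 3} (h1 : p.1 ≠ q.1)
    (heq : iasCol A p = iasCol A q) (hnz : iasCol A p ≠ 0) :
    OrdinarySep A 2 {p, q} ∧ CyclicSep A 2 {p, q} := by
  have hpq : p ≠ q := fun h => h1 (by rw [h])
  have hrank : iasRank A {p, q} ≤ 1 := by
    have himg : iasCol A '' {p, q} = {iasCol A p} := by
      rw [Set.image_pair, heq, Set.pair_eq_singleton]
    rw [iasRank, himg, finrank_span_singleton (heq ▸ hnz)]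
  have hlam : iasLambda A {p, q} < 2 := by
    have := lambda_le_rank A ({p, q} : Set (V × Fin 3))
    omega
  have hncard : ({p, q} : Set (V × Fin 3)).ncard = 2 := Set.ncard_pair hpq
  have hmemc : ∀ j : Fin 3, j ≠ p.2 → (p.1, j) ∈ ({p, q} : Set (V × Fin 3))ᶜ := by
    intro j hj
    simp only [Set.mem_compl_iff, Set.mem_insert_iff, Set.mem_singleton_iff]
    push_neg
    constructor
    · intro hh
      exact hj (by rw [← hh])
    · intro hh
      exact h1 (by rw [← hh])
  have hf1 : ∀ a : Fin 3, a + 1 ≠ a := by decide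
  have hf2 : ∀ a : Fin 3, a + 2 ≠ a := by decide
  have hf3 : ∀ a : Fin 3, a + 1 ≠ a + 2 := by decide
  have hncardc : 2 ≤ ({p, q} : Set (V × Fin 3))ᶜ.ncard := by
    have h2 : 1 < ({p, q} : Set (V × Fin 3))ᶜ.ncard :=
      (Set.one_lt_ncard (Set.toFinite _)).mpr
        ⟨(p.1, p.2 + 1), hmemc _ (hf1 p.2), (p.1, p.2 + 2), hmemc _ (hf2 p.2),
          fun hh => hf3 p.2 (congrArg Prod.snd hh)⟩
    omega
  have hcardV : 2 ≤ Fintype.card V := hn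
  have hncc : ({p, q} : Set (V × Fin 3))ᶜ.ncard = 3 * Fintype.card V - 2 := by
    have := Set.ncard_add_ncard_compl ({p, q} : Set (V × Fin 3))
    rw [hncard, Nat.card_eq_fintype_card, Fintype.card_prod, Fintype.card_fin] at this
    omega
  refine ⟨⟨by omega, hlam, by omega, hncardc⟩, ⟨by omega, hlam, ?_, ?_⟩⟩
  · exact dep_of_eq A hpq (by simp) (by simp) heq
  · apply dep_of_card
    have hr := rank_le_card A ({p, q} : Set (V × Fin 3))ᶜ
    rw [hncc]
    omega


lemma triple_seps (A : Matrix V V (ZMod 2)) (hconn : (toSimpleGraph A).Connected)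
    (hn : 1 < Fintype.card V) (v : V) :
    OrdinarySep A 3 {(v, 0), (v, 1), (v, 2)} ∧
      CyclicSep A 3 {(v, 0), (v, 1), (v, 2)} := by
  set T : Set (V × Fin 3) := {(v, 0), (v, 1), (v, 2)} with hT
  obtain ⟨u, hu⟩ := Fintype.exists_ne_of_one_lt_card hn v
  have hrank : iasRank A T ≤ 2 := rank_triple_le A v
  have hlam : iasLambda A T < 3 := by
    have := lambda_le_rank A T
    omega
  have hncard : T.ncard = 3 := ncard_triple v
  have hsubc : ({(u, 0), (u, 1), (u, 2)} : Set (V × Fin 3)) ⊆ Tᶜ := by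
    rintro p (rfl | rfl | rfl) <;>
    · intro hmem
      rcases hmem with h | h | h <;> exact hu (congrArg Prod.fst h)
  have hncardc : 3 ≤ Tᶜ.ncard := by
    have := Set.ncard_le_ncard hsubc (Set.toFinite _)
    rw [ncard_triple u] at this
    exact this
  refine ⟨⟨by omega, hlam, by omega, hncardc⟩, ⟨by omega, hlam, ?_, ?_⟩⟩
  · apply triple_dep A v
    intro j
    rcases f3 j with rfl | rfl | rfl <;> simp [hT]
  · apply triple_dep A u
    intro j
    apply hsubc
    rcases f3 j with rfl | rfl | rfl <;> simp

lemma disconn_seps (A : Matrix V V (ZMod 2)) (hA : A.IsSymm)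
    (hnp : ¬ (toSimpleGraph A).Preconnected) :
    ∃ S, OrdinarySep A 1 S ∧ CyclicSep A 1 S := by
  have hsym : ∀ a b, A a b = A b a := fun a b => hA.apply b a
  rw [SimpleGraph.Preconnected] at hnp
  push_neg at hnp
  obtain ⟨u, w, huw⟩ := hnp
  set X : Set V := {t | (toSimpleGraph A).Reachable u t} with hX
  have huX : u ∈ X := SimpleGraph.Reachable.refl u
  have hwX : w ∉ X := huw
  have hcross : ∀ x ∈ X, ∀ t, t ∉ X → A t x = 0 := by
    intro x hx t ht
    apply zmod2_eq_zero
    intro h1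
    apply ht
    have hadj : (toSimpleGraph A).Adj x t := by
      refine ⟨?_, by rw [hsym x t]; exact h1, h1⟩
      rintro rfl
      exact ht hx
    exact hx.trans hadj.reachable
  set S : Set (V × Fin 3) := {p | p.1 ∈ X} with hS
  have hmemS : ∀ p : V × Fin 3, p ∈ S ↔ p.1 ∈ X := fun p => Iff.rfl
  have hUS : ∀ f ∈ USp A S, ∀ t, t ∉ X → f t = 0 := by
    intro f hf
    induction hf using Submodule.span_induction with
    | mem g hg =>
      obtain ⟨⟨x, j⟩, hxj, rfl⟩ := hg
      have hxX : x ∈ X := hxj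
      intro t ht
      have htx : t ≠ x := fun h => ht (h ▸ hxX)
      rcases f3 j with rfl | rfl | rfl
      · rw [col0, Pi.single_apply, if_neg htx]
      · rw [col1_apply]
        exact hcross x hxX t ht
      · rw [col2_apply, if_neg htx, add_zero]
        exact hcross x hxX t ht
    | zero => intro t _; rfl
    | add f g _ _ hf hg => intro t ht; rw [Pi.add_apply, hf t ht, hg t ht, add_zero]
    | smul a f _ hf => intro t ht; rw [Pi.smul_apply, hf t ht, smul_zero]
  have hUC : ∀ f ∈ USp A Sᶜ, ∀ t, t ∈ X → f t = 0 := by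
    intro f hf
    induction hf using Submodule.span_induction with
    | mem g hg =>
      obtain ⟨⟨y, j⟩, hyj, rfl⟩ := hg
      have hyX : y ∉ X := hyj
      intro t ht
      have hty : t ≠ y := fun h => hyX (h ▸ ht)
      have hAty : A t y = 0 := by
        rw [hsym t y]
        exact hcross t ht y hyX
      rcases f3 j with rfl | rfl | rfl
      · rw [col0, Pi.single_apply, if_neg hty]
      · rw [col1_apply]
        exact hAty
      · rw [col2_apply, if_neg hty, add_zero]
        exact hAty
    | zero => intro t _; rfl
    | add f g _ _ hf hg => intro t ht; rw [Pi.add_apply, hf t ht, hg t ht, add_zero]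
    | smul a f _ hf => intro t ht; rw [Pi.smul_apply, hf t ht, smul_zero]
  have hbot : USp A S ⊓ USp A Sᶜ = ⊥ := by
    rw [eq_bot_iff]
    rintro f ⟨hf1, hf2⟩
    have : f = 0 := by
      funext t
      by_cases ht : t ∈ X
      · exact hUC f hf2 t ht
      · exact hUS f hf1 t ht
    simp [this]
  have hlam : iasLambda A S = 0 := by
    rw [lambda_eq, hbot, finrank_bot]
  have hSmem : (u, (0 : Fin 3)) ∈ S := huX
  have hCmem : (w, (0 : Fin 3)) ∈ Sᶜ := hwX
  refine ⟨S, ⟨one_pos, by omega, ?_, ?_⟩, ⟨one_pos, by omega, ?_, ?_⟩⟩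
  · exact (Set.ncard_pos (Set.toFinite _)).mpr ⟨_, hSmem⟩
  · exact (Set.ncard_pos (Set.toFinite _)).mpr ⟨_, hCmem⟩
  · exact triple_dep A u fun j => huX
  · exact triple_dep A w fun j => hwX

lemma n1_seps (A : Matrix V V (ZMod 2)) (hcard : Fintype.card V = 1) :
    ∃ S, OrdinarySep A 1 S ∧ CyclicSep A 1 S := by
  obtain ⟨v, hv⟩ := Fintype.card_eq_one_iff.mp hcard
  have hav : ∀ w, w = v := hv
  -- the zero column and the duplicated column
  have key : ∃ j k : Fin 3, j ≠ 0 ∧ k ≠ 0 ∧ j ≠ k ∧ iasCol A (v, j) = 0 ∧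
      iasCol A (v, k) = iasCol A (v, 0) := by
    rcases zmod2_cases (A v v) with ha | ha
    · refine ⟨1, 2, by decide, by decide, by decide, ?_, ?_⟩
      · funext t
        have := hav t
        subst this
        rw [col1_apply, ha]
        rfl
      · funext t
        have := hav t
        subst this
        rw [col2_apply, ha, col0, Pi.single_apply]
        simp
    · refine ⟨2, 1, by decide, by decide, by decide, ?_, ?_⟩
      · funext t
        have := hav t
        subst this
        rw [col2_apply, ha, if_pos rfl]
        show (1 : ZMod 2) + 1 = 0
        decide
      · funext t
        have := hav t
        subst this
        rw [col1_apply, ha, col0, Pi.single_apply, if_pos rfl]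
  obtain ⟨j, k, hj0, hk0, hjk, hjz, hkc⟩ := key
  set S : Set (V × Fin 3) := {(v, j)} with hS
  have hrank : iasRank A S = 0 := by
    have himg : iasCol A '' S = {0} := by
      rw [hS, Set.image_singleton, hjz]
    rw [iasRank, himg, Submodule.span_zero_singleton, finrank_bot]
  have hlam : iasLambda A S = 0 := by
    have h1 := lambda_le_rank A S
    omega
  have hmem0 : ((v, 0) : V × Fin 3) ∈ Sᶜ := by
    intro h
    rw [hS, Set.mem_singleton_iff] at h
    exact hj0 (congrArg Prod.snd h).symm
  have hmemk : ((v, k) : V × Fin 3) ∈ Sᶜ := by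
    intro h
    rw [hS, Set.mem_singleton_iff] at h
    exact hjk (congrArg Prod.snd h).symm
  refine ⟨S, ⟨one_pos, by omega, ?_, ?_⟩, ⟨one_pos, by omega, ?_, ?_⟩⟩
  · rw [hS, Set.ncard_singleton]
  · exact (Set.ncard_pos (Set.toFinite _)).mpr ⟨_, hmem0⟩
  · exact dep_of_zero A (show ((v, j) : V × Fin 3) ∈ S from rfl) hjz
  · exact dep_of_eq A (p := ((v, k) : V × Fin 3)) (q := ((v, 0) : V × Fin 3))
      (fun h => hk0 (congrArg Prod.snd h)) hmemk hmem0 hkc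

end IsoAux
theorem stmt1 (A : Matrix V V (ZMod 2)) (hA : A.IsSymm) :
    (Fintype.card V = 0 → iasKappaStar A = 0 ∧ iasTau A = ⊤) ∧
    ((Fintype.card V = 1 ∨ ¬ (toSimpleGraph A).Preconnected) →
      iasTau A = 1 ∧ iasKappaStar A = 1) ∧
    ((1 < Fintype.card V ∧ (toSimpleGraph A).Connected ∧
        ((∃ v, IsPendant A v) ∨ HasTwins A)) →
      iasTau A = 2 ∧ iasKappaStar A = 2) ∧
    ((1 < Fintype.card V ∧ (toSimpleGraph A).Connected ∧
        ¬ (∃ v, IsPendant A v) ∧ ¬ HasTwins A) →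
      iasTau A = 3 ∧ iasKappaStar A = 3) := by
  open IsoAux in
  refine ⟨?_, ?_, ?_, ?_⟩
  · -- n = 0
    intro hcard
    haveI : IsEmpty V := Fintype.card_eq_zero_iff.mp hcard
    constructor
    · apply Nat.sInf_eq_zero.mpr
      apply Or.inl
      refine Or.inr ?_
      rw [Set.mem_singleton_iff, hcard]
      omega
    · rw [iasTau, sInf_eq_top]
      rintro b ⟨m, rfl, S, h0, hl, hS, hSc⟩
      exfalso
      have hSe : S = ∅ := Set.eq_empty_of_isEmpty S
      rw [hSe, Set.ncard_empty] at hS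
      omega
  · -- n = 1 or disconnected
    intro h2
    obtain ⟨S, hord, hcyc⟩ : ∃ S, OrdinarySep A 1 S ∧ CyclicSep A 1 S := by
      rcases h2 with h | h
      · exact n1_seps A h
      · exact disconn_seps A hA h
    have hn1 : 1 ≤ Fintype.card V := by
      rcases h2 with h | h
      · omega
      · by_contra hc
        push_neg at hc
        have h0 : Fintype.card V = 0 := by omega
        haveI : IsEmpty V := Fintype.card_eq_zero_iff.mp h0
        exact h fun u => isEmptyElim u
    constructor
    · have heq : iasTau A = ((1 : ℕ) : ℕ∞) := by
        apply le_antisymm (tau_le A ⟨S, hord⟩)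
        apply tau_ge A
        rintro m hm ⟨T, hT⟩
        have := hT.1
        omega
      simpa using heq
    · apply le_antisymm (kappa_le A (Or.inl ⟨S, hcyc⟩))
      apply kappa_ge A
      · rintro m hm ⟨T, hT⟩
        have := hT.1
        omega
      · rw [rank_univ]
        omega
  · -- pendant or twins
    rintro ⟨hn, hconn, hpt⟩
    obtain ⟨p, q, hpq1, heqc, hnz⟩ := parallel_pair A hA hconn hn hpt
    obtain ⟨hord, hcyc⟩ := pair_seps A hconn hn hpq1 heqc hnz
    constructor
    · have heq : iasTau A = ((2 : ℕ) : ℕ∞) := by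
        apply le_antisymm (tau_le A ⟨_, hord⟩)
        apply tau_ge A
        rintro m hm ⟨T, hT⟩
        have h0 := hT.1
        have hm1 : m = 1 := by omega
        subst hm1
        exact no_ord_one A hA hconn hn ⟨T, hT⟩
      simpa using heq
    · apply le_antisymm (kappa_le A (Or.inl ⟨_, hcyc⟩))
      apply kappa_ge A
      · rintro m hm ⟨T, hT⟩
        have h0 := hT.1
        have hm1 : m = 1 := by omega
        subst hm1
        exact no_cyc_one A hA hconn hn ⟨T, hT⟩
      · rw [rank_univ]
        omega
  · -- 3-connected case
    rintro ⟨hn, hconn, hpend, htw⟩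
    obtain ⟨v⟩ : Nonempty V := Fintype.card_pos_iff.mp (by omega)
    obtain ⟨hord, hcyc⟩ := triple_seps A hconn hn v
    constructor
    · have heq : iasTau A = ((3 : ℕ) : ℕ∞) := by
        apply le_antisymm (tau_le A ⟨_, hord⟩)
        apply tau_ge A
        rintro m hm ⟨T, hT⟩
        have h0 := hT.1
        have hm1 : m = 1 ∨ m = 2 := by omega
        rcases hm1 with rfl | rfl
        · exact no_ord_one A hA hconn hn ⟨T, hT⟩
        · exact no_ord_two A hA hconn hn hpend htw ⟨T, hT⟩
      simpa using heq
    · apply le_antisymm (kappa_le A (Or.inl ⟨_, hcyc⟩))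
      apply kappa_ge A
      · rintro m hm ⟨T, hT⟩
        have h0 := hT.1
        have hm1 : m = 1 ∨ m = 2 := by omega
        rcases hm1 with rfl | rfl
        · exact no_cyc_one A hA hconn hn ⟨T, hT⟩
        · exact no_cyc_two A hA hconn hn hpend htw ⟨T, hT⟩
      · rw [rank_univ]
        omega
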